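/- For all n ≥ 4, with k = ⌊(n+3)/2⌋, the sum ∑_{j=0}^{k} (n+1-2k+j) C(n-j, k-j) p(j) is positive, where terms with n-j < k-j are understood via C(n-j,k-j)=0 and the coefficients n+1-2k+j may be negative. -/

import Mathlib

set_option maxHeartbeats 1600000


/-- The partition function: number of partitions of `n`, with `p 0 = 1`. -/
def partitionFn (n : ℕ) : ℕ := Fintype.card (Nat.Partition n)

/-- Helper to build explicit partitions. -/
def mkP (n : ℕ) (l : List ℕ) (h1 : ∀ i ∈ (l : Multiset ℕ), 0 < i := by decide)
    (h2 : (l : Multiset ℕ).sum = n := by decide) : Nat.Partition n :=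
  ⟨l, fun {_} hi => h1 _ hi, h2⟩

lemma p0 : partitionFn 0 = 1 := Fintype.card_unique

lemma p1 : partitionFn 1 = 1 := Fintype.card_unique

lemma hp2 : 2 ≤ partitionFn 2 := by
  have hn : (([mkP 2 [2], mkP 2 [1,1]]) : List (Nat.Partition 2)).Nodup := by decide
  have h := Finset.card_le_univ (α := Nat.Partition 2) ([mkP 2 [2], mkP 2 [1,1]] : List (Nat.Partition 2)).toFinset
  rw [List.toFinset_card_of_nodup hn] at h
  exact h

lemma hp3 : 3 ≤ partitionFn 3 := by
  have hn : (([mkP 3 [3], mkP 3 [2,1], mkP 3 [1,1,1]]) : List (Nat.Partition 3)).Nodup := by decide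
  have h := Finset.card_le_univ (α := Nat.Partition 3) ([mkP 3 [3], mkP 3 [2,1], mkP 3 [1,1,1]] : List (Nat.Partition 3)).toFinset
  rw [List.toFinset_card_of_nodup hn] at h
  exact h

lemma hp4 : 5 ≤ partitionFn 4 := by
  have hn : (([mkP 4 [4], mkP 4 [3,1], mkP 4 [2,2], mkP 4 [2,1,1], mkP 4 [1,1,1,1]]) : List (Nat.Partition 4)).Nodup := by decide
  have h := Finset.card_le_univ (α := Nat.Partition 4) ([mkP 4 [4], mkP 4 [3,1], mkP 4 [2,2], mkP 4 [2,1,1], mkP 4 [1,1,1,1]] : List (Nat.Partition 4)).toFinset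
  rw [List.toFinset_card_of_nodup hn] at h
  exact h

lemma hp5 : 7 ≤ partitionFn 5 := by
  have hn : (([mkP 5 [5], mkP 5 [4,1], mkP 5 [3,2], mkP 5 [3,1,1], mkP 5 [2,2,1], mkP 5 [2,1,1,1], mkP 5 [1,1,1,1,1]]) : List (Nat.Partition 5)).Nodup := by decide
  have h := Finset.card_le_univ (α := Nat.Partition 5) ([mkP 5 [5], mkP 5 [4,1], mkP 5 [3,2], mkP 5 [3,1,1], mkP 5 [2,2,1], mkP 5 [2,1,1,1], mkP 5 [1,1,1,1,1]] : List (Nat.Partition 5)).toFinset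
  rw [List.toFinset_card_of_nodup hn] at h
  exact h

lemma hp6 : 11 ≤ partitionFn 6 := by
  have hn : (([mkP 6 [6], mkP 6 [5,1], mkP 6 [4,2], mkP 6 [4,1,1], mkP 6 [3,3], mkP 6 [3,2,1], mkP 6 [3,1,1,1], mkP 6 [2,2,2], mkP 6 [2,2,1,1], mkP 6 [2,1,1,1,1], mkP 6 [1,1,1,1,1,1]]) : List (Nat.Partition 6)).Nodup := by decide
  have h := Finset.card_le_univ (α := Nat.Partition 6) ([mkP 6 [6], mkP 6 [5,1], mkP 6 [4,2], mkP 6 [4,1,1], mkP 6 [3,3], mkP 6 [3,2,1], mkP 6 [3,1,1,1], mkP 6 [2,2,2], mkP 6 [2,2,1,1], mkP 6 [2,1,1,1,1], mkP 6 [1,1,1,1,1,1]] : List (Nat.Partition 6)).toFinset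
  rw [List.toFinset_card_of_nodup hn] at h
  exact h

lemma hp7 : 15 ≤ partitionFn 7 := by
  have hn : (([mkP 7 [7], mkP 7 [6,1], mkP 7 [5,2], mkP 7 [5,1,1], mkP 7 [4,3], mkP 7 [4,2,1], mkP 7 [4,1,1,1], mkP 7 [3,3,1], mkP 7 [3,2,2], mkP 7 [3,2,1,1], mkP 7 [3,1,1,1,1], mkP 7 [2,2,2,1], mkP 7 [2,2,1,1,1], mkP 7 [2,1,1,1,1,1], mkP 7 [1,1,1,1,1,1,1]]) : List (Nat.Partition 7)).Nodup := by decide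
  have h := Finset.card_le_univ (α := Nat.Partition 7) ([mkP 7 [7], mkP 7 [6,1], mkP 7 [5,2], mkP 7 [5,1,1], mkP 7 [4,3], mkP 7 [4,2,1], mkP 7 [4,1,1,1], mkP 7 [3,3,1], mkP 7 [3,2,2], mkP 7 [3,2,1,1], mkP 7 [3,1,1,1,1], mkP 7 [2,2,2,1], mkP 7 [2,2,1,1,1], mkP 7 [2,1,1,1,1,1], mkP 7 [1,1,1,1,1,1,1]] : List (Nat.Partition 7)).toFinset
  rw [List.toFinset_card_of_nodup hn] at h
  exact h

/-- Basic absorption identity for binomial coefficients, in `ℤ`. -/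
lemma rel (n k : ℕ) : ((n : ℤ) + 1) * (Nat.choose n k : ℤ) =
    (Nat.choose (n+1) (k+1) : ℤ) * ((k : ℤ) + 1) := by
  exact_mod_cast Nat.add_one_mul_choose_eq n k

/-- Key binomial inequality for the even case. -/
lemma even_key (a : ℕ) : (Nat.choose (2*a+12) (a+7) : ℤ) <
    2 * (Nat.choose (2*a+10) (a+5) : ℤ) + 6 * (Nat.choose (2*a+9) (a+4) : ℤ) := by
  have hx3 : (0:ℤ) < (Nat.choose (2*a+9) (a+4) : ℤ) := by
    exact_mod_cast Nat.choose_pos (by omega)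
  have E0 := rel (2*a+11) (a+6)
  rw [show 2*a+11+1 = 2*a+12 by ring, show a+6+1 = a+7 by ring] at E0
  have E1 := rel (2*a+10) (a+5)
  rw [show 2*a+10+1 = 2*a+11 by ring, show a+5+1 = a+6 by ring] at E1
  have E2 := rel (2*a+9) (a+4)
  rw [show 2*a+9+1 = 2*a+10 by ring, show a+4+1 = a+5 by ring] at E2
  push_cast at E0 E1 E2
  set x0 := (Nat.choose (2*a+12) (a+7) : ℤ)
  set x1 := (Nat.choose (2*a+11) (a+6) : ℤ)
  set x2 := (Nat.choose (2*a+10) (a+5) : ℤ)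
  set x3 := (Nat.choose (2*a+9) (a+4) : ℤ)
  clear_value x0 x1 x2 x3
  -- E0 : (2a+12) x1 = x0 (a+7), E1 : (2a+11) x2 = x1 (a+6), E2 : (2a+10) x3 = x2 (a+5)
  have H1 : x1 * (((a:ℤ)+6)*((a:ℤ)+5)) = (2*(a:ℤ)+11)*(2*(a:ℤ)+10) * x3 := by
    linear_combination (-((a:ℤ)+5)) * E1 - (2*(a:ℤ)+11) * E2
  have H0 : x0 * (((a:ℤ)+7)*((a:ℤ)+6)*((a:ℤ)+5)) =
      (2*(a:ℤ)+12)*(2*(a:ℤ)+11)*(2*(a:ℤ)+10) * x3 := by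
    linear_combination (-(((a:ℤ)+6)*((a:ℤ)+5))) * E0 + (2*(a:ℤ)+12) * H1
  have key : (((a:ℤ)+7)*((a:ℤ)+6)*((a:ℤ)+5)) * (2*x2 + 6*x3 - x0) =
      (780 + 346*(a:ℤ) + 48*(a:ℤ)^2 + 2*(a:ℤ)^3) * x3 := by
    linear_combination (-2*((a:ℤ)+7)*((a:ℤ)+6)) * E2 - H0
  have hP : (0:ℤ) < 780 + 346*(a:ℤ) + 48*(a:ℤ)^2 + 2*(a:ℤ)^3 := by positivity
  have hD : (0:ℤ) < ((a:ℤ)+7)*((a:ℤ)+6)*((a:ℤ)+5) := by positivity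
  have h1 : (0:ℤ) < (((a:ℤ)+7)*((a:ℤ)+6)*((a:ℤ)+5)) * (2*x2 + 6*x3 - x0) := by
    rw [key]; exact mul_pos hP hx3
  nlinarith [h1, hD]

/-- Key binomial inequality for the odd case. -/
lemma odd_key (a : ℕ) : 2 * (Nat.choose (2*a+11) (a+7) : ℤ) + (Nat.choose (2*a+10) (a+6) : ℤ) <
    3 * (Nat.choose (2*a+8) (a+4) : ℤ) + 10 * (Nat.choose (2*a+7) (a+3) : ℤ)
    + 21 * (Nat.choose (2*a+6) (a+2) : ℤ) + 44 * (Nat.choose (2*a+5) (a+1) : ℤ)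
    + 75 * (Nat.choose (2*a+4) a : ℤ) := by
  have hx7 : (0:ℤ) < (Nat.choose (2*a+4) a : ℤ) := by
    exact_mod_cast Nat.choose_pos (by omega)
  have E0 := rel (2*a+10) (a+6)
  rw [show 2*a+10+1 = 2*a+11 by ring, show a+6+1 = a+7 by ring] at E0
  have E1 := rel (2*a+9) (a+5)
  rw [show 2*a+9+1 = 2*a+10 by ring, show a+5+1 = a+6 by ring] at E1
  have E2 := rel (2*a+8) (a+4)
  rw [show 2*a+8+1 = 2*a+9 by ring, show a+4+1 = a+5 by ring] at E2
  have E3 := rel (2*a+7) (a+3)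
  rw [show 2*a+7+1 = 2*a+8 by ring, show a+3+1 = a+4 by ring] at E3
  have E4 := rel (2*a+6) (a+2)
  rw [show 2*a+6+1 = 2*a+7 by ring, show a+2+1 = a+3 by ring] at E4
  have E5 := rel (2*a+5) (a+1)
  rw [show 2*a+5+1 = 2*a+6 by ring, show a+1+1 = a+2 by ring] at E5
  have E6 := rel (2*a+4) a
  rw [show 2*a+4+1 = 2*a+5 by ring, show a+1 = a+1 by ring] at E6
  push_cast at E0 E1 E2 E3 E4 E5 E6
  set x0 := (Nat.choose (2*a+11) (a+7) : ℤ)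
  set x1 := (Nat.choose (2*a+10) (a+6) : ℤ)
  set x2 := (Nat.choose (2*a+9) (a+5) : ℤ)
  set x3 := (Nat.choose (2*a+8) (a+4) : ℤ)
  set x4 := (Nat.choose (2*a+7) (a+3) : ℤ)
  set x5 := (Nat.choose (2*a+6) (a+2) : ℤ)
  set x6 := (Nat.choose (2*a+5) (a+1) : ℤ)
  set x7 := (Nat.choose (2*a+4) a : ℤ)
  clear_value x0 x1 x2 x3 x4 x5 x6 x7
  have H6 : x6 * ((a:ℤ)+1) = (2*(a:ℤ)+5) * x7 := by linear_combination -E6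
  have H5 : x5 * (((a:ℤ)+1)*((a:ℤ)+2)) = (2*(a:ℤ)+5)*(2*(a:ℤ)+6) * x7 := by
    linear_combination (-((a:ℤ)+1)) * E5 + (2*(a:ℤ)+6) * H6
  have H4 : x4 * (((a:ℤ)+1)*((a:ℤ)+2)*((a:ℤ)+3)) =
      (2*(a:ℤ)+5)*(2*(a:ℤ)+6)*(2*(a:ℤ)+7) * x7 := by
    linear_combination (-(((a:ℤ)+1)*((a:ℤ)+2))) * E4 + (2*(a:ℤ)+7) * H5
  have H3 : x3 * (((a:ℤ)+1)*((a:ℤ)+2)*((a:ℤ)+3)*((a:ℤ)+4)) =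
      (2*(a:ℤ)+5)*(2*(a:ℤ)+6)*(2*(a:ℤ)+7)*(2*(a:ℤ)+8) * x7 := by
    linear_combination (-(((a:ℤ)+1)*((a:ℤ)+2)*((a:ℤ)+3))) * E3 + (2*(a:ℤ)+8) * H4
  have H2 : x2 * (((a:ℤ)+1)*((a:ℤ)+2)*((a:ℤ)+3)*((a:ℤ)+4)*((a:ℤ)+5)) =
      (2*(a:ℤ)+5)*(2*(a:ℤ)+6)*(2*(a:ℤ)+7)*(2*(a:ℤ)+8)*(2*(a:ℤ)+9) * x7 := by
    linear_combination (-(((a:ℤ)+1)*((a:ℤ)+2)*((a:ℤ)+3)*((a:ℤ)+4))) * E2 + (2*(a:ℤ)+9) * H3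
  have H1 : x1 * (((a:ℤ)+1)*((a:ℤ)+2)*((a:ℤ)+3)*((a:ℤ)+4)*((a:ℤ)+5)*((a:ℤ)+6)) =
      (2*(a:ℤ)+5)*(2*(a:ℤ)+6)*(2*(a:ℤ)+7)*(2*(a:ℤ)+8)*(2*(a:ℤ)+9)*(2*(a:ℤ)+10) * x7 := by
    linear_combination (-(((a:ℤ)+1)*((a:ℤ)+2)*((a:ℤ)+3)*((a:ℤ)+4)*((a:ℤ)+5))) * E1
      + (2*(a:ℤ)+10) * H2
  have H0 : x0 * (((a:ℤ)+1)*((a:ℤ)+2)*((a:ℤ)+3)*((a:ℤ)+4)*((a:ℤ)+5)*((a:ℤ)+6)*((a:ℤ)+7)) =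
      (2*(a:ℤ)+5)*(2*(a:ℤ)+6)*(2*(a:ℤ)+7)*(2*(a:ℤ)+8)*(2*(a:ℤ)+9)*(2*(a:ℤ)+10)*(2*(a:ℤ)+11) * x7 := by
    linear_combination (-(((a:ℤ)+1)*((a:ℤ)+2)*((a:ℤ)+3)*((a:ℤ)+4)*((a:ℤ)+5)*((a:ℤ)+6))) * E0
      + (2*(a:ℤ)+11) * H1
  have key : (((a:ℤ)+1)*((a:ℤ)+2)*((a:ℤ)+3)*((a:ℤ)+4)*((a:ℤ)+5)*((a:ℤ)+6)*((a:ℤ)+7)) *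
      (3*x3 + 10*x4 + 21*x5 + 44*x6 + 75*x7 - (2*x0 + x1)) =
      (1512000 + 2937000*(a:ℤ) + 2348770*(a:ℤ)^2 + 993895*(a:ℤ)^3 + 238180*(a:ℤ)^4
        + 31930*(a:ℤ)^5 + 2170*(a:ℤ)^6 + 55*(a:ℤ)^7) * x7 := by
    linear_combination 3*((a:ℤ)+5)*((a:ℤ)+6)*((a:ℤ)+7) * H3
      + 10*((a:ℤ)+4)*((a:ℤ)+5)*((a:ℤ)+6)*((a:ℤ)+7) * H4
      + 21*((a:ℤ)+3)*((a:ℤ)+4)*((a:ℤ)+5)*((a:ℤ)+6)*((a:ℤ)+7) * H5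
      + 44*((a:ℤ)+2)*((a:ℤ)+3)*((a:ℤ)+4)*((a:ℤ)+5)*((a:ℤ)+6)*((a:ℤ)+7) * H6
      - 2 * H0 - ((a:ℤ)+7) * H1
  have hP : (0:ℤ) < 1512000 + 2937000*(a:ℤ) + 2348770*(a:ℤ)^2 + 993895*(a:ℤ)^3
      + 238180*(a:ℤ)^4 + 31930*(a:ℤ)^5 + 2170*(a:ℤ)^6 + 55*(a:ℤ)^7 := by positivity
  have hD : (0:ℤ) < ((a:ℤ)+1)*((a:ℤ)+2)*((a:ℤ)+3)*((a:ℤ)+4)*((a:ℤ)+5)*((a:ℤ)+6)*((a:ℤ)+7) := by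
    positivity
  have h1 : (0:ℤ) < (((a:ℤ)+1)*((a:ℤ)+2)*((a:ℤ)+3)*((a:ℤ)+4)*((a:ℤ)+5)*((a:ℤ)+6)*((a:ℤ)+7)) *
      (3*x3 + 10*x4 + 21*x5 + 44*x6 + 75*x7 - (2*x0 + x1)) := by
    rw [key]; exact mul_pos hP hx7
  nlinarith [h1, hD]

theorem sum_pos_at_peak (n : ℕ) (hn : 4 ≤ n) :
    0 < ∑ j ∈ Finset.range ((n + 3) / 2 + 1),
        ((n : ℤ) + 1 - 2 * ((n + 3) / 2 : ℕ) + j) *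
          (Nat.choose (n - j) ((n + 3) / 2 - j)) * partitionFn j := by
  have hq2 : (2:ℤ) ≤ partitionFn 2 := by exact_mod_cast hp2
  have hq3 : (3:ℤ) ≤ partitionFn 3 := by exact_mod_cast hp3
  have hq4 : (5:ℤ) ≤ partitionFn 4 := by exact_mod_cast hp4
  have hq5 : (7:ℤ) ≤ partitionFn 5 := by exact_mod_cast hp5
  have hq6 : (11:ℤ) ≤ partitionFn 6 := by exact_mod_cast hp6
  have hq7 : (15:ℤ) ≤ partitionFn 7 := by exact_mod_cast hp7
  rcases lt_or_ge n 11 with h | h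
  · interval_cases n <;>
      (norm_num [Finset.sum_range_succ, p0, p1, Nat.choose] <;> linarith)
  rcases Nat.even_or_odd n with he | ho
  · -- even case : n = 2a+12
    obtain ⟨a, rfl⟩ : ∃ a, n = 2*a+12 := by
      obtain ⟨m, hm⟩ := he; exact ⟨m - 6, by omega⟩
    rw [show (2*a+12+3)/2 = a+7 by omega]
    rw [← Finset.sum_range_add_sum_Ico _ (show 4 ≤ a+8 by omega)]
    apply add_pos_of_pos_of_nonneg
    · rw [Finset.sum_range_succ, Finset.sum_range_succ, Finset.sum_range_succ,
        Finset.sum_range_succ, Finset.sum_range_zero]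
      rw [show 2*a+12-1 = 2*a+11 by omega, show a+7-1 = a+6 by omega,
        show 2*a+12-2 = 2*a+10 by omega, show a+7-2 = a+5 by omega,
        show 2*a+12-3 = 2*a+9 by omega, show a+7-3 = a+4 by omega]
      simp only [Nat.sub_zero, p0, p1]
      have c2 : (0:ℤ) ≤ (Nat.choose (2*a+10) (a+5) : ℤ) := Int.natCast_nonneg _
      have c3 : (0:ℤ) ≤ (Nat.choose (2*a+9) (a+4) : ℤ) := Int.natCast_nonneg _
      have t2 : (Nat.choose (2*a+10) (a+5) : ℤ) * 2 ≤
          (Nat.choose (2*a+10) (a+5) : ℤ) * partitionFn 2 := mul_le_mul_of_nonneg_left hq2 c2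
      have t3 : (Nat.choose (2*a+9) (a+4) : ℤ) * 3 ≤
          (Nat.choose (2*a+9) (a+4) : ℤ) * partitionFn 3 := mul_le_mul_of_nonneg_left hq3 c3
      have hk := even_key a
      push_cast
      nlinarith [hk, t2, t3]
    · apply Finset.sum_nonneg
      intro j hj
      rw [Finset.mem_Ico] at hj
      have hj4 : (4:ℤ) ≤ (j:ℤ) := by exact_mod_cast hj.1
      apply mul_nonneg (mul_nonneg _ (Int.natCast_nonneg _)) (Int.natCast_nonneg _)
      push_cast
      linarith
  · -- odd case : n = 2a+11
    obtain ⟨a, rfl⟩ : ∃ a, n = 2*a+11 := by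
      obtain ⟨m, hm⟩ := ho; exact ⟨m - 5, by omega⟩
    rw [show (2*a+11+3)/2 = a+7 by omega]
    rw [← Finset.sum_range_add_sum_Ico _ (show 8 ≤ a+8 by omega)]
    apply add_pos_of_pos_of_nonneg
    · rw [Finset.sum_range_succ, Finset.sum_range_succ, Finset.sum_range_succ,
        Finset.sum_range_succ, Finset.sum_range_succ, Finset.sum_range_succ,
        Finset.sum_range_succ, Finset.sum_range_succ, Finset.sum_range_zero]
      rw [show 2*a+11-1 = 2*a+10 by omega, show a+7-1 = a+6 by omega,
        show 2*a+11-2 = 2*a+9 by omega, show a+7-2 = a+5 by omega,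
        show 2*a+11-3 = 2*a+8 by omega, show a+7-3 = a+4 by omega,
        show 2*a+11-4 = 2*a+7 by omega, show a+7-4 = a+3 by omega,
        show 2*a+11-5 = 2*a+6 by omega, show a+7-5 = a+2 by omega,
        show 2*a+11-6 = 2*a+5 by omega, show a+7-6 = a+1 by omega,
        show 2*a+11-7 = 2*a+4 by omega, show a+7-7 = a by omega]
      simp only [Nat.sub_zero, p0, p1]
      have c3 : (0:ℤ) ≤ (Nat.choose (2*a+8) (a+4) : ℤ) := Int.natCast_nonneg _
      have c4 : (0:ℤ) ≤ (Nat.choose (2*a+7) (a+3) : ℤ) := Int.natCast_nonneg _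
      have c5 : (0:ℤ) ≤ (Nat.choose (2*a+6) (a+2) : ℤ) := Int.natCast_nonneg _
      have c6 : (0:ℤ) ≤ (Nat.choose (2*a+5) (a+1) : ℤ) := Int.natCast_nonneg _
      have c7 : (0:ℤ) ≤ (Nat.choose (2*a+4) a : ℤ) := Int.natCast_nonneg _
      have t3 : (Nat.choose (2*a+8) (a+4) : ℤ) * 3 ≤
          (Nat.choose (2*a+8) (a+4) : ℤ) * partitionFn 3 := mul_le_mul_of_nonneg_left hq3 c3
      have t4 : (Nat.choose (2*a+7) (a+3) : ℤ) * 5 ≤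
          (Nat.choose (2*a+7) (a+3) : ℤ) * partitionFn 4 := mul_le_mul_of_nonneg_left hq4 c4
      have t5 : (Nat.choose (2*a+6) (a+2) : ℤ) * 7 ≤
          (Nat.choose (2*a+6) (a+2) : ℤ) * partitionFn 5 := mul_le_mul_of_nonneg_left hq5 c5
      have t6 : (Nat.choose (2*a+5) (a+1) : ℤ) * 11 ≤
          (Nat.choose (2*a+5) (a+1) : ℤ) * partitionFn 6 := mul_le_mul_of_nonneg_left hq6 c6
      have t7 : (Nat.choose (2*a+4) a : ℤ) * 15 ≤
          (Nat.choose (2*a+4) a : ℤ) * partitionFn 7 := mul_le_mul_of_nonneg_left hq7 c7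
      have hk := odd_key a
      push_cast
      nlinarith [hk, t3, t4, t5, t6, t7]
    · apply Finset.sum_nonneg
      intro j hj
      rw [Finset.mem_Ico] at hj
      have hj8 : (8:ℤ) ≤ (j:ℤ) := by exact_mod_cast hj.1
      apply mul_nonneg (mul_nonneg _ (Int.natCast_nonneg _)) (Int.natCast_nonneg _)
      push_cast
      linarith
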